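/- A continuous map $f : X \to Y$ between compact Hausdorff spaces is a regular monomorphism if and only if it is injective. In particular, for injective $f$, the square with both legs $f$ and pushout $X \xrightarrow{f} Y \rightrightarrows Y \sqcup_X Y$ exhibits $X$ as the equalizer of the two pushout inclusions $Y \to Y \sqcup_X Y$. -/

import Mathlib

open CategoryTheory CategoryTheory.Limits

attribute [local instance] ConcreteCategory.instFunLike

universe u in
lemma stmt18_mem_range {X Y : CompHaus.{u}} (f : X ⟶ Y) {y : Y}
    (hy : (pushout.inl f f : Y ⟶ pushout f f) y = (pushout.inr f f : Y ⟶ pushout f f) y) :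
    y ∈ Set.range f := by
  by_contra hmem
  haveI : T1Space Y := T2Space.t1Space
  haveI : NormalSpace Y := @NormalSpace.of_compactSpace_r1Space _ _ _ T2Space.r1Space
  have hclosed : IsClosed (Set.range f) :=
    (isCompact_range (ConcreteCategory.hom f).continuous).isClosed
  obtain ⟨g, hg0, hg1, hg01⟩ := exists_continuous_zero_one_of_isClosed hclosed
    (isClosed_singleton (x := y)) (by simpa [Set.disjoint_singleton_right] using hmem)
  let I : CompHaus := CompHaus.of (ULift.{u} unitInterval)
  let φ₁ : Y ⟶ I := InducedCategory.homMk (TopCat.ofHom ⟨fun z => ULift.up ⟨g z, hg01 z⟩,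
    continuous_uliftUp.comp (Continuous.subtype_mk g.continuous _)⟩)
  let φ₂ : Y ⟶ I := InducedCategory.homMk (TopCat.ofHom ⟨fun _ => ULift.up ⟨0, unitInterval.zero_mem⟩, continuous_const⟩)
  have hw : f ≫ φ₁ = f ≫ φ₂ := by
    ext x
    exact hg0 ⟨x, rfl⟩
  have h1 : (pushout.inl f f) ≫ pushout.desc φ₁ φ₂ hw = φ₁ := pushout.inl_desc _ _ _
  have h2 : (pushout.inr f f) ≫ pushout.desc φ₁ φ₂ hw = φ₂ := pushout.inr_desc _ _ _
  have a1 := ConcreteCategory.congr_hom h1 y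
  have a2 := ConcreteCategory.congr_hom h2 y
  simp only [CategoryTheory.comp_apply] at a1 a2
  have hφ : φ₁ y = φ₂ y := by
    rw [← a1, ← a2]
    exact congrArg _ hy
  have hgy : g y = 0 := congrArg (fun a => a.down.val) hφ
  have h1y : g y = 1 := hg1 rfl
  rw [h1y] at hgy
  norm_num at hgy

/-- A continuous map between compact Hausdorff spaces is a regular
monomorphism iff it is injective; and for injective `f : X → Y`, `X` is the equalizer of
the two inclusions of `Y` into the pushout `Y ⊔_X Y`. -/
theorem stmt18 (X Y : CompHaus) (f : X ⟶ Y) :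
    (Nonempty (RegularMono f) ↔ Function.Injective ⇑f) ∧
    (Function.Injective ⇑f →
      Nonempty (IsLimit (Fork.ofι f (pushout.condition (f := f) (g := f))))) := by
  have key : Function.Injective ⇑f →
      Nonempty (IsLimit (Fork.ofι f (pushout.condition (f := f) (g := f)))) := by
    intro hf
    have hemb : Topology.IsEmbedding f :=
      (Continuous.isClosedEmbedding (ConcreteCategory.hom f).continuous hf).isEmbedding
    have hrange : ∀ (s : Fork (pushout.inl f f) (pushout.inr f f)) (w : s.pt),
        ∃ x, f x = s.ι w := by
      intro s w
      apply stmt18_mem_range f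
      calc (pushout.inl f f) (s.ι w) = (s.ι ≫ pushout.inl f f) w := rfl
        _ = (s.ι ≫ pushout.inr f f) w := by rw [s.condition]
        _ = (pushout.inr f f) (s.ι w) := rfl
    have hcont : ∀ (s : Fork (pushout.inl f f) (pushout.inr f f)),
        Continuous (fun w => (hrange s w).choose) := by
      intro s
      rw [hemb.continuous_iff]
      have : (⇑f ∘ fun w => (hrange s w).choose) = ⇑s.ι :=
        funext fun w => (hrange s w).choose_spec
      rw [this]
      exact (ConcreteCategory.hom s.ι).continuous
    refine ⟨Fork.IsLimit.mk _ (fun s => InducedCategory.homMk (TopCat.ofHom ⟨fun w => (hrange s w).choose, hcont s⟩))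
      (fun s => ?_) (fun s m hm => ?_)⟩
    · ext w
      exact (hrange s w).choose_spec
    · ext w
      apply hf
      have h1 : f (m w) = s.ι w := ConcreteCategory.congr_hom hm w
      rw [h1]
      exact ((hrange s w).choose_spec).symm
  refine ⟨⟨fun ⟨h⟩ => ?_, fun hf => ?_⟩, key⟩
  · haveI := h
    exact (CompHausLike.mono_iff_injective f).mp h.mono
  · exact ⟨⟨pushout f f, pushout.inl f f, pushout.inr f f, pushout.condition, (key hf).some⟩⟩
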